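/- arXiv:2108.07850 — 2 statements merged into one kernel-verified Lean document; each statement's English description precedes it below -/
import Mathlib

section
/- If φ is an indecomposable finite or semifinite harmonic function on a graded graph Γ, then its support supp(φ) = {λ : φ(λ) > 0} is a primitive (saturated) coideal: any two vertices in supp(φ) have a common majorant in supp(φ). -/
open Filter Topology ENNReal
open scoped Classical

noncomputable section

structure GradedGraph where
  V : Type
  lvl : V → ℕ
  levelFinite : ∀ n : ℕ, {v : V | lvl v = n}.Finite
  k : V → V → ℝ
  k_nonneg : ∀ a b, 0 ≤ k a b
  k_grade : ∀ a b, k a b ≠ 0 → lvl b = lvl a + 1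
  exists_up : ∀ a, ∃ b, 0 < k a b

namespace GradedGraph

variable (G : GradedGraph)

/-- The edge relation `λ ↗ μ`. -/
def Adj (a b : G.V) : Prop := 0 < G.k a b

/-- The path order: `a ≤ b` iff there is a (possibly empty) path from `a` to `b`. -/
def Le : G.V → G.V → Prop := Relation.ReflTransGen G.Adj

/-- `dimAux n a b` : weighted number of paths of length `n` from `a` to `b`. -/
def dimAux : ℕ → G.V → G.V → ℝ
  | 0, a, b => if a = b then 1 else 0
  | n + 1, a, b => ∑ᶠ c, dimAux n a c * G.k c b

/-- The shifted dimension `dim(a,b)`: weighted number of paths from `a` to `b`. -/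
def dim (a b : G.V) : ℝ := G.dimAux (G.lvl b - G.lvl a) a b

def IsIdeal (I : Set G.V) : Prop := ∀ a ∈ I, ∀ b, G.Le a b → b ∈ I

def IsCoideal (J : Set G.V) : Prop := ∀ a ∈ J, ∀ b, G.Le b a → b ∈ J

def IsSaturatedIdeal (I : Set G.V) : Prop :=
  G.IsIdeal I ∧ ∀ a, (∀ b, G.Adj a b → b ∈ I) → a ∈ I

def IsSaturatedCoideal (J : Set G.V) : Prop :=
  G.IsCoideal J ∧ ∀ a ∈ J, ∃ b ∈ J, G.Adj a b

def IsPrimitiveCoideal (J : Set G.V) : Prop :=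
  G.IsSaturatedCoideal J ∧ ∀ J1 J2 : Set G.V, G.IsSaturatedCoideal J1 →
    G.IsSaturatedCoideal J2 → J = J1 ∪ J2 → J = J1 ∨ J = J2

/-- A harmonic function `φ : Γ → ℝ≥0 ∪ {+∞}`. -/
def Harmonic (φ : G.V → ℝ≥0∞) : Prop :=
  ∀ a, φ a = ∑ᶠ b, ENNReal.ofReal (G.k a b) * φ b

/-- The submodule of relations `λ = Σ_{μ : λ↗μ} κ(λ,μ)·μ` in the free module on vertices. -/
def relSub : Submodule ℝ (G.V →₀ ℝ) :=
  Submodule.span ℝ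
    {x | ∃ a : G.V, x = Finsupp.single a 1 - ∑ᶠ b, G.k a b • Finsupp.single b (1 : ℝ)}

/-- The group `K_0(Γ)`. -/
abbrev K0 := (G.V →₀ ℝ) ⧸ G.relSub

def toK0 : (G.V →₀ ℝ) →ₗ[ℝ] G.K0 := G.relSub.mkQ

/-- The class of a vertex in `K_0(Γ)`. -/
def vtx (a : G.V) : G.K0 := G.toK0 (Finsupp.single a 1)

/-- The positive cone `K_0^+(Γ)` generated by the vertices. -/
def cone : Set G.K0 := {x | ∃ c : G.V →₀ ℝ, (∀ a, 0 ≤ c a) ∧ x = G.toK0 c}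

/-- The partial order `x ≤_K y` defined by the cone. -/
def leK (x y : G.K0) : Prop := y - x ∈ G.cone

/-- The value of (the `ℝ≥0`-linear extension of) `φ` on a nonnegative element of the
free module on vertices. -/
def evalC (φ : G.V → ℝ≥0∞) (c : G.V →₀ ℝ) : ℝ≥0∞ :=
  ∑ a ∈ c.support, ENNReal.ofReal (c a) * φ a

/-- A semifinite harmonic function: it is harmonic, not everywhere finite, and its value
on any element of the cone is the supremum of its finite values on smaller cone elements
(stated on nonnegative representatives). -/
def Semifinite (φ : G.V → ℝ≥0∞) : Prop :=
  G.Harmonic φ ∧ (∃ a, φ a = ⊤) ∧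
    ∀ c : G.V →₀ ℝ, (∀ a, 0 ≤ c a) →
      G.evalC φ c = ⨆ d : {d : G.V →₀ ℝ //
        (∀ a, 0 ≤ d a) ∧ G.leK (G.toK0 d) (G.toK0 c) ∧ G.evalC φ d ≠ ⊤},
          G.evalC φ d.1

/-- A finite or semifinite harmonic function. -/
def FinOrSemifinite (φ : G.V → ℝ≥0∞) : Prop :=
  (G.Harmonic φ ∧ ∀ a, φ a ≠ ⊤) ∨ G.Semifinite φ

/-- An indecomposable (finite or semifinite, not identically zero) harmonic function:
any finite or semifinite harmonic `ψ ≤ φ` not vanishing identically on the finiteness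
ideal of `φ` is proportional to `φ` on the finiteness ideal of `φ`. -/
def Indecomposable (φ : G.V → ℝ≥0∞) : Prop :=
  G.FinOrSemifinite φ ∧ (∃ a, φ a ≠ 0) ∧
    ∀ ψ : G.V → ℝ≥0∞, G.FinOrSemifinite ψ → (∀ a, ψ a ≤ φ a) →
      (∃ a, φ a ≠ ⊤ ∧ ψ a ≠ 0) →
        ∃ C : ℝ≥0∞, ∀ a, φ a ≠ ⊤ → ψ a = C * φ a

end GradedGraph

structure BranchingGraph extends GradedGraph where
  root : V
  root_lvl : lvl root = 0
  root_unique : ∀ v, lvl v = 0 → v = root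
  exists_down : ∀ v, lvl v ≠ 0 → ∃ u, 0 < k u v

end

noncomputable section

namespace GradedGraph

variable (G : GradedGraph)

/-! ### basic infrastructure -/

def lvlFinset (n : ℕ) : Finset G.V := (G.levelFinite n).toFinset

lemma mem_lvlFinset {n : ℕ} {v : G.V} : v ∈ G.lvlFinset n ↔ G.lvl v = n := by
  simp [lvlFinset, Set.Finite.mem_toFinset]

/-- One-step averaging operator. -/
def T (f : G.V → ℝ≥0∞) : G.V → ℝ≥0∞ := fun v => ∑ᶠ w, ENNReal.ofReal (G.k v w) * f w

lemma T_eq_sum (f : G.V → ℝ≥0∞) (v : G.V) :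
    G.T f v = ∑ w ∈ G.lvlFinset (G.lvl v + 1), ENNReal.ofReal (G.k v w) * f w := by
  apply finsum_eq_sum_of_support_subset
  intro w hw
  have hk : G.k v w ≠ 0 := by
    intro h
    simp [h] at hw
  simp [mem_lvlFinset, G.k_grade v w hk]

lemma harmonic_iff_T (φ : G.V → ℝ≥0∞) : G.Harmonic φ ↔ G.T φ = φ := by
  constructor
  · intro h; funext v; exact (h v).symm
  · intro h a; exact (congrFun h a).symm

lemma T_mono {f g : G.V → ℝ≥0∞} (h : ∀ v, f v ≤ g v) : ∀ v, G.T f v ≤ G.T g v := by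
  intro v
  rw [T_eq_sum, T_eq_sum]
  exact Finset.sum_le_sum fun w _ => mul_le_mul_right (h w) _

lemma T_iter_mono (n : ℕ) {f g : G.V → ℝ≥0∞} (h : ∀ v, f v ≤ g v) :
    ∀ v, (G.T)^[n] f v ≤ (G.T)^[n] g v := by
  induction n generalizing f g with
  | zero => exact h
  | succ n ih =>
    rw [Function.iterate_succ_apply, Function.iterate_succ_apply]
    exact ih (G.T_mono h)

/-- terms are below the `T`-sum. -/
lemma term_le_T (f : G.V → ℝ≥0∞) (v w : G.V) :
    ENNReal.ofReal (G.k v w) * f w ≤ G.T f v := by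
  by_cases hk : G.k v w = 0
  · simp [hk]
  · rw [T_eq_sum]
    exact Finset.single_le_sum (f := fun w => ENNReal.ofReal (G.k v w) * f w)
      (fun i _ => zero_le) (G.mem_lvlFinset.2 (G.k_grade v w hk))

lemma T_ne_zero (f : G.V → ℝ≥0∞) (v : G.V) (h : G.T f v ≠ 0) :
    ∃ w, G.Adj v w ∧ f w ≠ 0 := by
  rw [T_eq_sum] at h
  obtain ⟨w, _, hw⟩ := Finset.exists_ne_zero_of_sum_ne_zero h
  have hk : G.k v w ≠ 0 := by intro h0; simp [h0] at hw
  exact ⟨w, lt_of_le_of_ne (G.k_nonneg v w) (Ne.symm hk), fun h0 => hw (by simp [h0])⟩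

/-! ### support of a harmonic function -/

lemma harmonic_supp_step {φ : G.V → ℝ≥0∞} (hφ : G.Harmonic φ) {v w : G.V}
    (hadj : G.Adj v w) (hw : φ w ≠ 0) : φ v ≠ 0 := by
  have hterm : ENNReal.ofReal (G.k v w) * φ w ≤ φ v := by
    conv_rhs => rw [← (G.harmonic_iff_T φ).1 hφ]
    exact G.term_le_T φ v w
  intro h0
  rw [h0, le_zero_iff] at hterm
  exact (mul_ne_zero (by simpa [ENNReal.ofReal_pos, Adj] using hadj) hw) hterm

lemma harmonic_supp_coideal {φ : G.V → ℝ≥0∞} (hφ : G.Harmonic φ) {a b : G.V}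
    (hab : G.Le b a) (ha : φ a ≠ 0) : φ b ≠ 0 := by
  induction hab using Relation.ReflTransGen.head_induction_on with
  | refl => exact ha
  | head hadj _ ih => exact G.harmonic_supp_step hφ hadj ih

lemma harmonic_supp_saturated {φ : G.V → ℝ≥0∞} (hφ : G.Harmonic φ) {a : G.V}
    (ha : φ a ≠ 0) : ∃ b, G.Adj a b ∧ φ b ≠ 0 := by
  apply G.T_ne_zero
  rw [(G.harmonic_iff_T φ).1 hφ]
  exact ha

lemma harmonic_ne_top_step {φ : G.V → ℝ≥0∞} (hφ : G.Harmonic φ) {v w : G.V}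
    (hv : φ v ≠ ⊤) (hadj : G.Adj v w) : φ w ≠ ⊤ := by
  have hterm : ENNReal.ofReal (G.k v w) * φ w ≤ φ v := by
    conv_rhs => rw [← (G.harmonic_iff_T φ).1 hφ]
    exact G.term_le_T φ v w
  intro h0
  rw [h0, ENNReal.mul_top (by simpa [ENNReal.ofReal_pos, Adj] using hadj)] at hterm
  exact hv (top_le_iff.1 hterm)

lemma harmonic_ne_top_le {φ : G.V → ℝ≥0∞} (hφ : G.Harmonic φ) {v w : G.V}
    (hv : φ v ≠ ⊤) (h : G.Le v w) : φ w ≠ ⊤ := by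
  induction h with
  | refl => exact hv
  | tail _ hadj ih => exact G.harmonic_ne_top_step hφ ih hadj


/-! ### the minimal harmonic extension from an up-closed set -/

section Psi

variable (I : Set G.V) (φ : G.V → ℝ≥0∞)

def idealFn : G.V → ℝ≥0∞ := fun v => if v ∈ I then φ v else 0

def psiN (n : ℕ) : G.V → ℝ≥0∞ := (G.T)^[n] (G.idealFn I φ)

def psi : G.V → ℝ≥0∞ := fun v => ⨆ n, G.psiN I φ n v

variable {I φ}
variable (hup : ∀ v ∈ I, ∀ u, G.Adj v u → u ∈ I) (hφ : G.Harmonic φ)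

include hup hφ

lemma idealFn_le_T : ∀ v, G.idealFn I φ v ≤ G.T (G.idealFn I φ) v := by
  intro v
  by_cases hv : v ∈ I
  · have : G.T (G.idealFn I φ) v = G.T φ v := by
      rw [T_eq_sum, T_eq_sum]
      apply Finset.sum_congr rfl
      intro w _
      by_cases hk : G.k v w = 0
      · simp [hk]
      · have hw : w ∈ I := hup v hv w (lt_of_le_of_ne (G.k_nonneg v w) (Ne.symm hk))
        simp [idealFn, hw]
    rw [this, (G.harmonic_iff_T φ).1 hφ, idealFn, if_pos hv]
  · simp [idealFn, hv]

lemma psiN_mono {m n : ℕ} (h : m ≤ n) : ∀ v, G.psiN I φ m v ≤ G.psiN I φ n v := by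
  induction n with
  | zero => simpa [Nat.le_zero.1 h] using fun v => le_refl _
  | succ n ih =>
    rcases Nat.lt_or_ge m (n+1) with h' | h'
    · intro v
      refine le_trans (ih (Nat.lt_succ_iff.1 h') v) ?_
      have : ∀ v, G.psiN I φ n v ≤ G.psiN I φ (n+1) v := by
        unfold psiN
        rw [Function.iterate_succ_apply]
        exact G.T_iter_mono n (G.idealFn_le_T hup hφ)
      exact this v
    · have : m = n + 1 := le_antisymm h h'
      subst this; exact fun v => le_refl _

lemma psiN_eq_on_I (n : ℕ) : ∀ v ∈ I, G.psiN I φ n v = φ v := by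
  induction n with
  | zero => intro v hv; simp [psiN, idealFn, hv]
  | succ n ih =>
    intro v hv
    unfold psiN
    rw [Function.iterate_succ_apply']
    have : G.T (G.psiN I φ n) v = G.T φ v := by
      rw [T_eq_sum, T_eq_sum]
      apply Finset.sum_congr rfl
      intro w _
      by_cases hk : G.k v w = 0
      · simp [hk]
      · have hw : w ∈ I := hup v hv w (lt_of_le_of_ne (G.k_nonneg v w) (Ne.symm hk))
        rw [ih w hw]
    rw [show (G.T)^[n] (G.idealFn I φ) = G.psiN I φ n from rfl, this,
      (G.harmonic_iff_T φ).1 hφ]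

lemma psiN_le_phi (n : ℕ) : ∀ v, G.psiN I φ n v ≤ φ v := by
  have h1 : ∀ v, G.idealFn I φ v ≤ φ v := by
    intro v; by_cases hv : v ∈ I <;> simp [idealFn, hv]
  intro v
  calc G.psiN I φ n v ≤ (G.T)^[n] φ v := G.T_iter_mono n h1 v
    _ = φ v := by rw [Function.iterate_fixed ((G.harmonic_iff_T φ).1 hφ)]

lemma psi_le_phi : ∀ v, G.psi I φ v ≤ φ v :=
  fun v => iSup_le fun n => G.psiN_le_phi hup hφ n v

lemma psi_eq_on_I : ∀ v ∈ I, G.psi I φ v = φ v := by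
  intro v hv
  refine le_antisymm (G.psi_le_phi hup hφ v) ?_
  rw [← G.psiN_eq_on_I hup hφ 0 v hv]
  exact le_iSup (fun n => G.psiN I φ n v) 0

lemma psi_harmonic : G.Harmonic (G.psi I φ) := by
  rw [harmonic_iff_T]
  funext v
  rw [T_eq_sum]
  have h1 : ∀ w, ENNReal.ofReal (G.k v w) * G.psi I φ w
      = ⨆ n, ENNReal.ofReal (G.k v w) * G.psiN I φ n w := by
    intro w; simp only [psi]; rw [ENNReal.mul_iSup]
  calc (∑ w ∈ G.lvlFinset (G.lvl v + 1), ENNReal.ofReal (G.k v w) * G.psi I φ w)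
      = ∑ w ∈ G.lvlFinset (G.lvl v + 1), ⨆ n, ENNReal.ofReal (G.k v w) * G.psiN I φ n w := by
        exact Finset.sum_congr rfl fun w _ => h1 w
    _ = ⨆ n, ∑ w ∈ G.lvlFinset (G.lvl v + 1), ENNReal.ofReal (G.k v w) * G.psiN I φ n w := by
        apply ENNReal.finsetSum_iSup_of_monotone
        intro w m n hmn
        exact mul_le_mul_right (G.psiN_mono hup hφ hmn w) _
    _ = ⨆ n, G.psiN I φ (n+1) v := by
        apply iSup_congr
        intro n
        rw [show G.psiN I φ (n+1) = G.T (G.psiN I φ n) by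
          unfold psiN; rw [Function.iterate_succ_apply']]
        rw [T_eq_sum]
    _ = G.psi I φ v := by
        apply le_antisymm
        · exact iSup_le fun n => le_iSup (fun n => G.psiN I φ n v) (n+1)
        · exact iSup_le fun n => le_trans (G.psiN_mono hup hφ (Nat.le_succ n) v)
            (le_iSup (fun m => G.psiN I φ (m+1) v) n)

omit hup hφ in
/-- vertices where some `psiN` is nonzero have a supp-majorant in `I`. -/
lemma psiN_ne_zero_majorant (n : ℕ) (v : G.V) (h : G.psiN I φ n v ≠ 0) :
    ∃ c ∈ I, φ c ≠ 0 ∧ G.Le v c := by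
  induction n generalizing v with
  | zero =>
    by_cases hv : v ∈ I
    · exact ⟨v, hv, by simpa [psiN, idealFn, hv] using h, Relation.ReflTransGen.refl⟩
    · simp [psiN, idealFn, hv] at h
  | succ n ih =>
    rw [show G.psiN I φ (n+1) = G.T (G.psiN I φ n) by
      unfold psiN; rw [Function.iterate_succ_apply']] at h
    obtain ⟨w, hadj, hw⟩ := G.T_ne_zero _ v h
    obtain ⟨c, hc1, hc2, hc3⟩ := ih w hw
    exact ⟨c, hc1, hc2, Relation.ReflTransGen.head hadj hc3⟩

omit hup hφ in
lemma psi_ne_zero_majorant (v : G.V) (h : G.psi I φ v ≠ 0) :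
    ∃ c ∈ I, φ c ≠ 0 ∧ G.Le v c := by
  have : ∃ n, G.psiN I φ n v ≠ 0 := by
    by_contra hall
    push_neg at hall
    exact h (by simp [psi, hall])
  obtain ⟨n, hn⟩ := this
  exact G.psiN_ne_zero_majorant n v hn

end Psi


/-! ### K0 and evalC machinery -/

/-! ### the pushforward operator on the free module -/

def pushV (v : G.V) : G.V →₀ ℝ :=
  Finsupp.onFinset (G.lvlFinset (G.lvl v + 1)) (fun w => G.k v w)
    (fun w hw => G.mem_lvlFinset.2 (G.k_grade v w hw))

@[simp] lemma pushV_apply (v w : G.V) : G.pushV v w = G.k v w := rfl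

def P : (G.V →₀ ℝ) →ₗ[ℝ] (G.V →₀ ℝ) :=
  Finsupp.lsum ℝ fun v => LinearMap.toSpanSingleton ℝ _ (G.pushV v)

lemma P_single (v : G.V) (t : ℝ) : G.P (Finsupp.single v t) = t • G.pushV v := by
  simp [P, Finsupp.lsum_single, LinearMap.toSpanSingleton_apply]

lemma P_apply (z : G.V →₀ ℝ) (u : G.V) :
    G.P z u = ∑ v ∈ z.support, z v * G.k v u := by
  rw [P, Finsupp.lsum_apply, Finsupp.sum_apply, Finsupp.sum]
  apply Finset.sum_congr rfl
  intro v _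
  simp [LinearMap.toSpanSingleton_apply]

lemma P_apply_nonneg {z : G.V →₀ ℝ} (hz : ∀ v, 0 ≤ z v) (u : G.V) : 0 ≤ G.P z u := by
  rw [P_apply]
  exact Finset.sum_nonneg fun v _ => mul_nonneg (hz v) (G.k_nonneg v u)

lemma P_nonneg {z : G.V →₀ ℝ} (hz : ∀ v, 0 ≤ z v) : ∀ u, 0 ≤ G.P z u :=
  G.P_apply_nonneg hz

lemma P_apply_mono {z z' : G.V →₀ ℝ} (h : ∀ v, z v ≤ z' v) (u : G.V) :
    G.P z u ≤ G.P z' u := by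
  have h2 : ∀ v, 0 ≤ (z' - z) v := by
    intro v; rw [Finsupp.sub_apply]; linarith [h v]
  have h3 := G.P_apply_nonneg h2 u
  rw [map_sub, Finsupp.sub_apply] at h3
  linarith

lemma P_pow_nonneg (n : ℕ) {z : G.V →₀ ℝ} (hz : ∀ v, 0 ≤ z v) : ∀ u, 0 ≤ (G.P ^ n) z u := by
  induction n with
  | zero => simpa using hz
  | succ n ih =>
    intro u
    rw [pow_succ', Module.End.mul_apply]
    exact G.P_apply_nonneg ih u

lemma P_pow_mono (n : ℕ) {z z' : G.V →₀ ℝ} (h : ∀ v, z v ≤ z' v) :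
    ∀ u, (G.P ^ n) z u ≤ (G.P ^ n) z' u := by
  induction n with
  | zero => simpa using h
  | succ n ih =>
    intro u
    rw [pow_succ', Module.End.mul_apply, Module.End.mul_apply]
    exact G.P_apply_mono ih u

lemma P_pow_apply_eq_zero_of_lvl_lt {n : ℕ} (z : G.V →₀ ℝ) {v : G.V} (h : G.lvl v < n) :
    (G.P ^ n) z v = 0 := by
  induction n generalizing v with
  | zero => omega
  | succ n ih =>
    rw [pow_succ', Module.End.mul_apply, P_apply]
    apply Finset.sum_eq_zero
    intro w hw
    by_cases hk : G.k w v = 0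
    · simp [hk]
    · have hlvl : G.lvl v = G.lvl w + 1 := G.k_grade w v hk
      have : (G.P ^ n) z w = 0 := ih (by omega)
      simp [this]

lemma P_support_subset {I : Set G.V} (hup : ∀ v ∈ I, ∀ u, G.Adj v u → u ∈ I)
    {z : G.V →₀ ℝ} (hz : ↑z.support ⊆ I) : ↑(G.P z).support ⊆ I := by
  intro u hu
  have hne : G.P z u ≠ 0 := Finsupp.mem_support_iff.1 hu
  rw [P_apply] at hne
  obtain ⟨v, hv, hvne⟩ := Finset.exists_ne_zero_of_sum_ne_zero hne
  have hk : G.k v u ≠ 0 := fun h0 => hvne (by simp [h0])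
  exact hup v (hz hv) u (lt_of_le_of_ne (G.k_nonneg v u) (Ne.symm hk))

lemma P_pow_support_subset {I : Set G.V} (hup : ∀ v ∈ I, ∀ u, G.Adj v u → u ∈ I)
    (n : ℕ) {z : G.V →₀ ℝ} (hz : ↑z.support ⊆ I) : ↑((G.P ^ n) z).support ⊆ I := by
  induction n with
  | zero => simpa using hz
  | succ n ih =>
    rw [pow_succ', Module.End.mul_apply]
    exact G.P_support_subset hup ih

/-! ### evalC lemmas -/

lemma evalC_eq_sum (f : G.V → ℝ≥0∞) (c : G.V →₀ ℝ) {s : Finset G.V}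
    (hs : c.support ⊆ s) :
    G.evalC f c = ∑ v ∈ s, ENNReal.ofReal (c v) * f v := by
  apply Finset.sum_subset hs
  intro v _ hv
  rw [Finsupp.notMem_support_iff] at hv
  simp [hv]

lemma evalC_single (f : G.V → ℝ≥0∞) (a : G.V) :
    G.evalC f (Finsupp.single a 1) = f a := by
  rw [G.evalC_eq_sum f _ (s := {a}) (Finsupp.support_single_subset)]
  simp

lemma evalC_mono_fn {f g : G.V → ℝ≥0∞} (h : ∀ v, f v ≤ g v) (c : G.V →₀ ℝ) :
    G.evalC f c ≤ G.evalC g c :=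
  Finset.sum_le_sum fun v _ => mul_le_mul_right (h v) _

lemma evalC_congr_fn {f g : G.V → ℝ≥0∞} (c : G.V →₀ ℝ)
    (h : ∀ v ∈ c.support, f v = g v) : G.evalC f c = G.evalC g c :=
  Finset.sum_congr rfl fun v hv => by rw [h v hv]

lemma evalC_T (f : G.V → ℝ≥0∞) (c : G.V →₀ ℝ) (hc : ∀ v, 0 ≤ c v) :
    G.evalC f (G.P c) = G.evalC (G.T f) c := by
  classical
  set s := c.support with hs
  set U := s.biUnion (fun v => G.lvlFinset (G.lvl v + 1)) with hU
  have hsupp : (G.P c).support ⊆ U := by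
    intro u hu
    have hne : G.P c u ≠ 0 := Finsupp.mem_support_iff.1 hu
    rw [P_apply] at hne
    obtain ⟨v, hv, hvne⟩ := Finset.exists_ne_zero_of_sum_ne_zero hne
    have hk : G.k v u ≠ 0 := fun h0 => hvne (by simp [h0])
    exact Finset.mem_biUnion.2 ⟨v, hv, G.mem_lvlFinset.2 (G.k_grade v u hk)⟩
  rw [G.evalC_eq_sum f _ hsupp]
  have step1 : ∀ u ∈ U, ENNReal.ofReal (G.P c u) * f u
      = ∑ v ∈ s, ENNReal.ofReal (c v * G.k v u) * f u := by
    intro u _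
    rw [P_apply, ENNReal.ofReal_sum_of_nonneg (fun v _ => mul_nonneg (hc v) (G.k_nonneg v u)),
      Finset.sum_mul]
  rw [Finset.sum_congr rfl step1, Finset.sum_comm]
  have step2 : ∀ v ∈ s, (∑ u ∈ U, ENNReal.ofReal (c v * G.k v u) * f u)
      = ENNReal.ofReal (c v) * G.T f v := by
    intro v hv
    have : ∀ u, ENNReal.ofReal (c v * G.k v u) * f u
        = ENNReal.ofReal (c v) * (ENNReal.ofReal (G.k v u) * f u) := by
      intro u
      rw [ENNReal.ofReal_mul (hc v), mul_assoc]
    rw [Finset.sum_congr rfl (fun u _ => this u), ← Finset.mul_sum]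
    congr 1
    rw [T_eq_sum]
    symm
    apply Finset.sum_subset
    · intro u hu
      exact Finset.mem_biUnion.2 ⟨v, hv, hu⟩
    · intro u _ hu
      have hk : G.k v u = 0 := by
        by_contra hk
        exact hu (G.mem_lvlFinset.2 (G.k_grade v u hk))
      simp [hk]
  exact Finset.sum_congr rfl step2

lemma evalC_T_iter (f : G.V → ℝ≥0∞) (c : G.V →₀ ℝ) (hc : ∀ v, 0 ≤ c v) (n : ℕ) :
    G.evalC ((G.T)^[n] f) c = G.evalC f ((G.P ^ n) c) := by
  induction n generalizing f with
  | zero => simp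
  | succ n ih =>
    rw [Function.iterate_succ_apply, ih (G.T f), pow_succ', Module.End.mul_apply,
      G.evalC_T f _ (G.P_pow_nonneg n hc)]

lemma evalC_P_of_harmonic {φ : G.V → ℝ≥0∞} (hφ : G.Harmonic φ) (c : G.V →₀ ℝ)
    (hc : ∀ v, 0 ≤ c v) : G.evalC φ (G.P c) = G.evalC φ c := by
  rw [G.evalC_T φ c hc, (G.harmonic_iff_T φ).1 hφ]

lemma evalC_P_pow_of_harmonic {φ : G.V → ℝ≥0∞} (hφ : G.Harmonic φ) (c : G.V →₀ ℝ)
    (hc : ∀ v, 0 ≤ c v) (n : ℕ) : G.evalC φ ((G.P ^ n) c) = G.evalC φ c := by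
  rw [← G.evalC_T_iter φ c hc n, Function.iterate_fixed ((G.harmonic_iff_T φ).1 hφ)]


/-! ### restriction to a set, and the real-valued functional -/

def RI (I : Set G.V) (z : G.V →₀ ℝ) : G.V →₀ ℝ := z.filter (· ∈ I)

lemma RI_apply (I : Set G.V) (z : G.V →₀ ℝ) (v : G.V) :
    G.RI I z v = if v ∈ I then z v else 0 := by
  simp [RI, Finsupp.filter_apply]

lemma RI_nonneg (I : Set G.V) {z : G.V →₀ ℝ} (hz : ∀ v, 0 ≤ z v) (v : G.V) :
    0 ≤ G.RI I z v := by
  rw [RI_apply]; split <;> [exact hz v; exact le_refl 0]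

lemma RI_support_subset_I (I : Set G.V) (z : G.V →₀ ℝ) : ↑(G.RI I z).support ⊆ I := by
  intro v hv
  have := Finsupp.mem_support_iff.1 hv
  rw [RI_apply] at this
  by_contra hvI
  simp [hvI] at this

lemma RI_support_subset (I : Set G.V) (z : G.V →₀ ℝ) : (G.RI I z).support ⊆ z.support := by
  intro v hv
  have := Finsupp.mem_support_iff.1 hv
  rw [RI_apply] at this
  rw [Finsupp.mem_support_iff]
  intro h0; rw [h0] at this; simp at this

lemma RI_eq_self {I : Set G.V} {z : G.V →₀ ℝ} (hz : ↑z.support ⊆ I) : G.RI I z = z := by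
  ext v
  rw [RI_apply]
  by_cases hv : v ∈ I
  · simp [hv]
  · simp [hv]
    by_contra h0
    exact hv (hz (Finsupp.mem_support_iff.2 fun h => h0 h.symm))

lemma RI_le (I : Set G.V) {z : G.V →₀ ℝ} (hz : ∀ v, 0 ≤ z v) (v : G.V) :
    G.RI I z v ≤ z v := by
  rw [RI_apply]; split <;> [exact le_refl _; exact hz v]

lemma evalC_idealFn (I : Set G.V) (φ : G.V → ℝ≥0∞) (z : G.V →₀ ℝ) :
    G.evalC (G.idealFn I φ) z = G.evalC φ (G.RI I z) := by
  rw [G.evalC_eq_sum φ (G.RI I z) (G.RI_support_subset I z)]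
  apply Finset.sum_congr rfl
  intro v _
  rw [RI_apply, idealFn]
  by_cases hv : v ∈ I <;> simp [hv]

def wt (I : Set G.V) (φ : G.V → ℝ≥0∞) : G.V → ℝ := fun v => if v ∈ I then (φ v).toReal else 0

lemma wt_nonneg (I : Set G.V) (φ : G.V → ℝ≥0∞) (v : G.V) : 0 ≤ G.wt I φ v := by
  rw [wt]; split <;> [exact ENNReal.toReal_nonneg; exact le_refl 0]

def ell (I : Set G.V) (φ : G.V → ℝ≥0∞) : (G.V →₀ ℝ) →ₗ[ℝ] ℝ :=
  Finsupp.linearCombination ℝ (G.wt I φ)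

lemma ell_apply (I : Set G.V) (φ : G.V → ℝ≥0∞) (z : G.V →₀ ℝ) :
    G.ell I φ z = ∑ v ∈ z.support, z v * G.wt I φ v := by
  rw [ell, Finsupp.linearCombination_apply, Finsupp.sum]
  simp [smul_eq_mul]

lemma ell_nonneg (I : Set G.V) (φ : G.V → ℝ≥0∞) {z : G.V →₀ ℝ} (hz : ∀ v, 0 ≤ z v) :
    0 ≤ G.ell I φ z := by
  rw [ell_apply]
  exact Finset.sum_nonneg fun v _ => mul_nonneg (hz v) (G.wt_nonneg I φ v)

lemma ell_mono (I : Set G.V) (φ : G.V → ℝ≥0∞) {z z' : G.V →₀ ℝ} (h : ∀ v, z v ≤ z' v) :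
    G.ell I φ z ≤ G.ell I φ z' := by
  have h2 : ∀ v, 0 ≤ (z' - z) v := by
    intro v; rw [Finsupp.sub_apply]; linarith [h v]
  have := G.ell_nonneg I φ h2
  rw [map_sub] at this
  linarith

lemma ofReal_ell {I : Set G.V} {φ : G.V → ℝ≥0∞} (hfin : ∀ v ∈ I, φ v ≠ ⊤)
    {z : G.V →₀ ℝ} (hz : ∀ v, 0 ≤ z v) :
    ENNReal.ofReal (G.ell I φ z) = G.evalC φ (G.RI I z) := by
  rw [ell_apply,
    ENNReal.ofReal_sum_of_nonneg (fun v _ => mul_nonneg (hz v) (G.wt_nonneg I φ v)),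
    G.evalC_eq_sum φ (G.RI I z) (G.RI_support_subset I z)]
  apply Finset.sum_congr rfl
  intro v _
  rw [RI_apply, wt]
  by_cases hv : v ∈ I
  · rw [if_pos hv, if_pos hv, ENNReal.ofReal_mul (hz v), ENNReal.ofReal_toReal (hfin v hv)]
  · simp [hv]

/-! ### relSub and the pushforward -/

lemma finsum_push (a : G.V) :
    ∑ᶠ b, G.k a b • Finsupp.single b (1 : ℝ) = G.pushV a := by
  have hsupp : (Function.support fun b => G.k a b • Finsupp.single b (1 : ℝ))
      ⊆ ↑(G.lvlFinset (G.lvl a + 1)) := by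
    intro b hb
    have hk : G.k a b ≠ 0 := by
      intro h0
      apply hb; simp [h0]
    exact G.mem_lvlFinset.2 (G.k_grade a b hk)
  rw [finsum_eq_sum_of_support_subset _ hsupp]
  ext u
  rw [Finset.sum_apply']
  have : ∀ b ∈ G.lvlFinset (G.lvl a + 1),
      (G.k a b • Finsupp.single b (1 : ℝ)) u = if b = u then G.k a b else 0 := by
    intro b _
    rw [Finsupp.smul_apply, Finsupp.single_apply]
    split <;> simp
  rw [Finset.sum_congr rfl this, Finset.sum_ite_eq' (G.lvlFinset (G.lvl a + 1)) u]
  by_cases hu : u ∈ G.lvlFinset (G.lvl a + 1)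
  · simp [hu]
  · rw [if_neg hu, pushV_apply]
    by_contra h0
    exact hu (G.mem_lvlFinset.2 (G.k_grade a u fun h => h0 h.symm))

lemma sub_P_mem_relSub (z : G.V →₀ ℝ) : z - G.P z ∈ G.relSub := by
  induction z using Finsupp.induction_linear with
  | zero => simp
  | add f g hf hg =>
    have : f + g - G.P (f + g) = (f - G.P f) + (g - G.P g) := by
      rw [map_add]; abel
    rw [this]; exact Submodule.add_mem _ hf hg
  | single a t =>
    have h1 : Finsupp.single a t - G.P (Finsupp.single a t)
        = t • (Finsupp.single a 1 - G.pushV a) := by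
      rw [P_single, smul_sub, Finsupp.smul_single, smul_eq_mul, mul_one]
    rw [h1]
    apply Submodule.smul_mem
    apply Submodule.subset_span
    exact ⟨a, by rw [finsum_push]⟩

lemma sub_P_pow_mem_relSub (z : G.V →₀ ℝ) (n : ℕ) : z - (G.P ^ n) z ∈ G.relSub := by
  induction n with
  | zero => simp
  | succ n ih =>
    have : z - (G.P ^ (n+1)) z = (z - (G.P ^ n) z) + ((G.P ^ n) z - G.P ((G.P ^ n) z)) := by
      rw [pow_succ', Module.End.mul_apply]; abel
    rw [this]
    exact Submodule.add_mem _ ih (G.sub_P_mem_relSub _)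

lemma relSub_le_range : G.relSub ≤ LinearMap.range (LinearMap.id - G.P) := by
  rw [relSub, Submodule.span_le]
  rintro x ⟨a, rfl⟩
  refine ⟨Finsupp.single a 1, ?_⟩
  rw [LinearMap.sub_apply, LinearMap.id_apply, P_single, one_smul, finsum_push]

lemma toK0_eq_iff (y z : G.V →₀ ℝ) : G.toK0 y = G.toK0 z ↔ y - z ∈ G.relSub := by
  constructor
  · intro h
    have : G.toK0 (y - z) = 0 := by rw [map_sub, h, sub_self]
    rwa [toK0, ← LinearMap.mem_ker, Submodule.ker_mkQ] at this
  · intro h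
    have : G.toK0 (y - z) = 0 := by
      rw [toK0, ← LinearMap.mem_ker, Submodule.ker_mkQ]; exact h
    rw [map_sub, sub_eq_zero] at this
    exact this

lemma leK_unpack {d c : G.V →₀ ℝ} (h : G.leK (G.toK0 d) (G.toK0 c)) :
    ∃ f x : G.V →₀ ℝ, (∀ v, 0 ≤ f v) ∧ c - d - f = x - G.P x := by
  obtain ⟨f, hf, heq⟩ := h
  have h1 : G.toK0 (c - d - f) = 0 := by
    rw [map_sub, map_sub, ← heq]; abel
  have h2 : c - d - f ∈ G.relSub := by
    rwa [toK0, ← LinearMap.mem_ker, Submodule.ker_mkQ] at h1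
  obtain ⟨x, hx⟩ := G.relSub_le_range h2
  exact ⟨f, x, hf, by rw [← hx, LinearMap.sub_apply, LinearMap.id_apply]⟩

lemma leK_RI_pow (I : Set G.V) {c : G.V →₀ ℝ} (hc : ∀ v, 0 ≤ c v) (n : ℕ) :
    G.leK (G.toK0 (G.RI I ((G.P ^ n) c))) (G.toK0 c) := by
  refine ⟨(G.P ^ n) c - G.RI I ((G.P ^ n) c), ?_, ?_⟩
  · intro v
    rw [Finsupp.sub_apply]
    have := G.RI_le I (G.P_pow_nonneg n hc) v
    linarith
  · rw [map_sub]
    have h1 : G.toK0 c = G.toK0 ((G.P ^ n) c) :=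
      (G.toK0_eq_iff _ _).2 (G.sub_P_pow_mem_relSub c n)
    rw [h1]

lemma leK_trans_toK0 {e d c : G.V →₀ ℝ} (h1 : G.leK (G.toK0 e) (G.toK0 d))
    (h2 : G.leK (G.toK0 d) (G.toK0 c)) : G.leK (G.toK0 e) (G.toK0 c) := by
  obtain ⟨f1, hf1, heq1⟩ := h1
  obtain ⟨f2, hf2, heq2⟩ := h2
  refine ⟨f1 + f2, fun v => by
    rw [Finsupp.add_apply]; exact add_nonneg (hf1 v) (hf2 v), ?_⟩
  rw [map_add, ← heq1, ← heq2]; abel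


/-! ### the key estimate -/

section Crux

variable {I : Set G.V} {φ : G.V → ℝ≥0∞}
variable (hup : ∀ v ∈ I, ∀ u, G.Adj v u → u ∈ I)
  (hfin : ∀ v ∈ I, φ v ≠ ⊤) (hφ : G.Harmonic φ)

omit hup hfin hφ in
lemma evalC_psiN_eq (n : ℕ) (c : G.V →₀ ℝ) (hc : ∀ v, 0 ≤ c v) :
    G.evalC (G.psiN I φ n) c = G.evalC φ (G.RI I ((G.P ^ n) c)) := by
  rw [psiN, G.evalC_T_iter _ _ hc, ← evalC_idealFn]

include hup hφ in
lemma evalC_psi_eq_iSup (c : G.V →₀ ℝ) :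
    G.evalC (G.psi I φ) c = ⨆ n, G.evalC (G.psiN I φ n) c := by
  unfold evalC
  have h1 : ∀ v, ENNReal.ofReal (c v) * G.psi I φ v
      = ⨆ n, ENNReal.ofReal (c v) * G.psiN I φ n v := by
    intro v; simp only [psi]; rw [ENNReal.mul_iSup]
  rw [Finset.sum_congr rfl fun v _ => h1 v]
  apply ENNReal.finsetSum_iSup_of_monotone
  intro v m n hmn
  exact mul_le_mul_right (G.psiN_mono hup hφ hmn v) _

include hup hfin hφ in
lemma ell_P_eq {z : G.V →₀ ℝ} (hz : ∀ v, 0 ≤ z v) (hsupp : ↑z.support ⊆ I) :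
    G.ell I φ (G.P z) = G.ell I φ z := by
  have h1 : ENNReal.ofReal (G.ell I φ (G.P z)) = ENNReal.ofReal (G.ell I φ z) := by
    rw [G.ofReal_ell hfin (G.P_nonneg hz), G.ofReal_ell hfin hz,
      G.RI_eq_self (G.P_support_subset hup hsupp), G.RI_eq_self hsupp,
      G.evalC_P_of_harmonic hφ z hz]
  rwa [ENNReal.ofReal_eq_ofReal_iff (G.ell_nonneg I φ (G.P_nonneg hz))
    (G.ell_nonneg I φ hz)] at h1

include hup hfin hφ in
lemma ell_P_pow_eq {z : G.V →₀ ℝ} (hz : ∀ v, 0 ≤ z v) (hsupp : ↑z.support ⊆ I) (n : ℕ) :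
    G.ell I φ ((G.P ^ n) z) = G.ell I φ z := by
  induction n with
  | zero => simp
  | succ n ih =>
    rw [pow_succ', Module.End.mul_apply,
      G.ell_P_eq hup hfin hφ (G.P_pow_nonneg n hz) (G.P_pow_support_subset hup n hsupp), ih]

include hup hfin hφ in
/-- The key estimate: an `I`-supported element below `c` in the `K₀`-order has
`φ`-value at most `ψ(c)`. -/
lemma crux {e c : G.V →₀ ℝ} (hc : ∀ v, 0 ≤ c v) (he : ∀ v, 0 ≤ e v)
    (hesupp : ↑e.support ⊆ I) (hle : G.leK (G.toK0 e) (G.toK0 c)) :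
    G.evalC φ e ≤ G.evalC (G.psi I φ) c := by
  by_cases hT : G.evalC (G.psi I φ) c = ⊤
  · rw [hT]; exact le_top
  obtain ⟨f, x, hf, heq⟩ := G.leK_unpack hle
  set L : ℝ := (G.evalC (G.psi I φ) c).toReal with hL
  have hL0 : 0 ≤ L := ENNReal.toReal_nonneg
  set E : ℝ := G.ell I φ e with hE
  -- each push of c has value at most L
  have hlam : ∀ n, G.ell I φ ((G.P ^ n) c) ≤ L := by
    intro n
    have h1 : ENNReal.ofReal (G.ell I φ ((G.P ^ n) c)) = G.evalC (G.psiN I φ n) c := by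
      rw [G.evalC_psiN_eq n c hc, G.ofReal_ell hfin (G.P_pow_nonneg n hc)]
    have h2 : G.evalC (G.psiN I φ n) c ≤ G.evalC (G.psi I φ) c :=
      G.evalC_mono_fn (fun v => le_iSup (fun n => G.psiN I φ n v) n) c
    rw [← h1] at h2
    exact (ENNReal.ofReal_le_iff_le_toReal hT).1 h2
  -- the basic identity
  have hiden : ∀ n : ℕ, G.ell I φ ((G.P ^ n) c) - E - G.ell I φ ((G.P ^ n) f)
      = G.ell I φ ((G.P ^ n) x) - G.ell I φ ((G.P ^ (n+1)) x) := by
    intro n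
    have h1 := congrArg (fun z => G.ell I φ ((G.P ^ n) z)) heq
    simp only [map_sub] at h1
    rw [G.ell_P_pow_eq hup hfin hφ he hesupp n] at h1
    have h2 : (G.P ^ n) (G.P x) = (G.P ^ (n+1)) x := by
      rw [pow_succ, Module.End.mul_apply]
    rw [h2] at h1
    linarith [h1]
  -- lower bound for ell (P^N x)
  have hlower : ∀ N : ℕ, G.ell I φ x + N * (E - L) ≤ G.ell I φ ((G.P ^ N) x) := by
    intro N
    induction N with
    | zero => simp
    | succ N ih =>
      have h1 := hiden N
      have h2 := hlam N
      have h3 : 0 ≤ G.ell I φ ((G.P ^ N) f) := G.ell_nonneg I φ (G.P_pow_nonneg N hf)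
      push_cast
      push_cast at ih
      nlinarith [ih]
  -- upper bound for ell (P^N x)
  set M : ℕ := x.support.sup G.lvl with hM
  have hxle : ∀ v, x v ≤ (∑ m ∈ Finset.range (M+1), (G.P ^ m) c) v := by
    intro v
    have hsum_nonneg : 0 ≤ (∑ m ∈ Finset.range (M+1), (G.P ^ m) c) v := by
      rw [Finset.sum_apply']
      exact Finset.sum_nonneg fun m _ => G.P_pow_nonneg m hc v
    by_cases hv : G.lvl v ≤ M
    · -- telescoping identity
      have htel : x - (G.P ^ (M+1)) x = ∑ m ∈ Finset.range (M+1), (G.P ^ m) (c - e - f) := by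
        have h1 : ∀ m, (G.P ^ m) (c - e - f) = (G.P ^ m) x - (G.P ^ (m+1)) x := by
          intro m
          rw [heq, map_sub, pow_succ, Module.End.mul_apply]
        rw [Finset.sum_congr rfl fun m _ => h1 m]
        rw [Finset.sum_range_sub' (fun m => (G.P ^ m) x)]
        simp
      have h0 : ((G.P ^ (M+1)) x) v = 0 :=
        G.P_pow_apply_eq_zero_of_lvl_lt x (by omega)
      have h2 : x v = (∑ m ∈ Finset.range (M+1), (G.P ^ m) (c - e - f)) v := by
        have := congrArg (fun z : G.V →₀ ℝ => z v) htel
        simp only [Finsupp.sub_apply] at this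
        rw [h0, sub_zero] at this
        exact this
      rw [h2, Finset.sum_apply', Finset.sum_apply']
      apply Finset.sum_le_sum
      intro m _
      simp only [map_sub, Finsupp.sub_apply]
      have h3 : 0 ≤ ((G.P ^ m) e) v := G.P_pow_nonneg m he v
      have h4 : 0 ≤ ((G.P ^ m) f) v := G.P_pow_nonneg m hf v
      linarith
    · have hx0 : x v = 0 := by
        by_contra h0
        exact hv (Finset.le_sup (Finsupp.mem_support_iff.2 h0))
      rw [hx0]
      exact hsum_nonneg
  have hupper : ∀ N : ℕ, G.ell I φ ((G.P ^ N) x) ≤ (M+1) * L := by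
    intro N
    calc G.ell I φ ((G.P ^ N) x)
        ≤ G.ell I φ ((G.P ^ N) (∑ m ∈ Finset.range (M+1), (G.P ^ m) c)) :=
          G.ell_mono I φ (G.P_pow_mono N hxle)
      _ = ∑ m ∈ Finset.range (M+1), G.ell I φ ((G.P ^ (N+m)) c) := by
          rw [map_sum, map_sum]
          apply Finset.sum_congr rfl
          intro m _
          rw [← Module.End.mul_apply, ← pow_add]
      _ ≤ ∑ m ∈ Finset.range (M+1), L := Finset.sum_le_sum fun m _ => hlam (N+m)
      _ = (M+1) * L := by
          rw [Finset.sum_const, Finset.card_range, nsmul_eq_mul]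
          push_cast; ring
  -- conclude E ≤ L
  have hEL : E ≤ L := by
    by_contra hEL
    push_neg at hEL
    obtain ⟨N, hN⟩ := exists_nat_gt (((M+1) * L - G.ell I φ x) / (E - L))
    have hpos : 0 < E - L := by linarith
    have h1 : ((M+1) * L - G.ell I φ x) < N * (E - L) := by
      rw [div_lt_iff₀ hpos] at hN
      linarith
    have h2 := hlower N
    have h3 := hupper N
    nlinarith
  -- translate back
  have h1 : G.evalC φ e = ENNReal.ofReal E := by
    rw [hE, G.ofReal_ell hfin he, G.RI_eq_self hesupp]
  rw [h1, ← ENNReal.ofReal_toReal hT, ← hL]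
  exact ENNReal.ofReal_le_ofReal hEL

end Crux


/-! ### the semifinite condition for psi -/

section SemifinitePsi

variable {I : Set G.V} {φ : G.V → ℝ≥0∞}
variable (hup : ∀ v ∈ I, ∀ u, G.Adj v u → u ∈ I)
  (hfin : ∀ v ∈ I, φ v ≠ ⊤) (hφ : G.Harmonic φ)

include hup hfin hφ in
lemma psi_semifinite_cond (c : G.V →₀ ℝ) (hc : ∀ a, 0 ≤ c a) :
    G.evalC (G.psi I φ) c = ⨆ d : {d : G.V →₀ ℝ //
        (∀ a, 0 ≤ d a) ∧ G.leK (G.toK0 d) (G.toK0 c) ∧ G.evalC (G.psi I φ) d ≠ ⊤},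
          G.evalC (G.psi I φ) d.1 := by
  apply le_antisymm
  · rw [G.evalC_psi_eq_iSup hup hφ c]
    apply iSup_le
    intro n
    rw [G.evalC_psiN_eq n c hc]
    set e := G.RI I ((G.P ^ n) c) with he_def
    have he : ∀ v, 0 ≤ e v := G.RI_nonneg I (G.P_pow_nonneg n hc)
    have hesupp : ↑e.support ⊆ I := G.RI_support_subset_I I ((G.P ^ n) c)
    have hle : G.leK (G.toK0 e) (G.toK0 c) := G.leK_RI_pow I hc n
    have hpsie : G.evalC (G.psi I φ) e = G.evalC φ e :=
      G.evalC_congr_fn e (fun v hv => G.psi_eq_on_I hup hφ v (hesupp hv))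
    have hfine : G.evalC (G.psi I φ) e ≠ ⊤ := by
      rw [hpsie, ← G.RI_eq_self hesupp, ← G.ofReal_ell hfin he]
      exact ENNReal.ofReal_ne_top
    calc G.evalC φ e = G.evalC (G.psi I φ) e := hpsie.symm
      _ ≤ _ := le_iSup (fun d : {d : G.V →₀ ℝ //
          (∀ a, 0 ≤ d a) ∧ G.leK (G.toK0 d) (G.toK0 c) ∧ G.evalC (G.psi I φ) d ≠ ⊤} =>
            G.evalC (G.psi I φ) d.1) ⟨e, he, hle, hfine⟩
  · apply iSup_le
    rintro ⟨d, hd0, hdle, -⟩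
    rw [G.evalC_psi_eq_iSup hup hφ d]
    apply iSup_le
    intro n
    rw [G.evalC_psiN_eq n d hd0]
    exact G.crux hup hfin hφ hc (G.RI_nonneg I (G.P_pow_nonneg n hd0))
      (G.RI_support_subset_I I ((G.P ^ n) d))
      (G.leK_trans_toK0 (G.leK_RI_pow I hd0 n) hdle)

end SemifinitePsi

/-! ### existence of finite majorants in the support, for semifinite functions -/

lemma supp_subset_fin {φ : G.V → ℝ≥0∞} {d : G.V →₀ ℝ} (hd0 : ∀ v, 0 ≤ d v)
    (hfin : G.evalC φ d ≠ ⊤) : ↑d.support ⊆ {v | φ v ≠ ⊤} := by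
  intro v hv
  have hterm : ENNReal.ofReal (d v) * φ v ≤ G.evalC φ d :=
    Finset.single_le_sum (f := fun v => ENNReal.ofReal (d v) * φ v)
      (fun i _ => zero_le) hv
  intro htop
  have hdv : d v ≠ 0 := Finsupp.mem_support_iff.1 hv
  have : ENNReal.ofReal (d v) ≠ 0 := by
    simp [ENNReal.ofReal_eq_zero]
    cases lt_or_eq_of_le (hd0 v) with
    | inl h => exact h
    | inr h => exact absurd h.symm hdv
  rw [htop, ENNReal.mul_top this] at hterm
  exact hfin (top_le_iff.1 hterm)

lemma single_one_nonneg (a : G.V) : ∀ v, (0:ℝ) ≤ Finsupp.single a (1:ℝ) v := by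
  intro v
  rw [Finsupp.single_apply]
  split <;> norm_num

lemma exists_fin_majorant {φ : G.V → ℝ≥0∞} (hsf : G.Semifinite φ)
    {a : G.V} (ha : φ a ≠ 0) : ∃ w, G.Le a w ∧ φ w ≠ 0 ∧ φ w ≠ ⊤ := by
  obtain ⟨hφ, -, hcond⟩ := hsf
  by_cases hatop : φ a = ⊤
  swap
  · exact ⟨a, Relation.ReflTransGen.refl, ha, hatop⟩
  set F : Set G.V := {v | φ v ≠ ⊤} with hF
  have hupF : ∀ v ∈ F, ∀ u, G.Adj v u → u ∈ F :=
    fun v hv u hadj => G.harmonic_ne_top_step hφ hv hadj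
  have hfinF : ∀ v ∈ F, φ v ≠ ⊤ := fun v hv => hv
  have htop : G.evalC (G.psi F φ) (Finsupp.single a 1) = ⊤ := by
    rw [← top_le_iff]
    have h1 : (⊤ : ℝ≥0∞) = G.evalC φ (Finsupp.single a 1) := by
      rw [G.evalC_single, hatop]
    rw [h1, hcond (Finsupp.single a 1) (G.single_one_nonneg a)]
    apply iSup_le
    rintro ⟨d, hd0, hdle, hdfin⟩
    exact G.crux hupF hfinF hφ (G.single_one_nonneg a) hd0 (G.supp_subset_fin hd0 hdfin) hdle
  have hne : G.psi F φ a ≠ 0 := by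
    rw [G.evalC_single] at htop
    rw [htop]
    exact ENNReal.top_ne_zero
  obtain ⟨c, hcF, hc0, hLe⟩ := G.psi_ne_zero_majorant a hne
  exact ⟨c, hLe, hc0, hcF⟩


/-! ### main theorem ingredients -/

lemma harmonic_of_finOrSemifinite {φ : G.V → ℝ≥0∞} (h : G.FinOrSemifinite φ) :
    G.Harmonic φ := by
  cases h with
  | inl h => exact h.1
  | inr h => exact h.1

lemma main_common_majorant {φ : G.V → ℝ≥0∞} (hφ : G.Indecomposable φ)
    {a b : G.V} (ha : φ a ≠ 0) (hb : φ b ≠ 0) :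
    ∃ c, φ c ≠ 0 ∧ G.Le a c ∧ G.Le b c := by
  obtain ⟨hfos, -, hind⟩ := hφ
  have hharm : G.Harmonic φ := G.harmonic_of_finOrSemifinite hfos
  by_contra hno
  push_neg at hno
  -- finite majorants of a and b in the support
  have hmaj : ∀ v : G.V, φ v ≠ 0 → ∃ w, G.Le v w ∧ φ w ≠ 0 ∧ φ w ≠ ⊤ := by
    intro v hv
    cases hfos with
    | inl h => exact ⟨v, Relation.ReflTransGen.refl, hv, h.2 v⟩
    | inr h => exact G.exists_fin_majorant h hv
  obtain ⟨w, haw, hw0, hwt⟩ := hmaj a ha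
  obtain ⟨w', hbw', hw'0, hw't⟩ := hmaj b hb
  -- the up-set of w
  set I : Set G.V := {v | G.Le w v} with hI
  have hupI : ∀ v ∈ I, ∀ u, G.Adj v u → u ∈ I :=
    fun v hv u hadj => Relation.ReflTransGen.tail hv hadj
  have hfinI : ∀ v ∈ I, φ v ≠ ⊤ :=
    fun v hv => G.harmonic_ne_top_le hharm hwt hv
  have hwI : w ∈ I := Relation.ReflTransGen.refl
  set ψ : G.V → ℝ≥0∞ := G.psi I φ with hψ
  have hψle : ∀ v, ψ v ≤ φ v := G.psi_le_phi hupI hharm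
  have hψharm : G.Harmonic ψ := G.psi_harmonic hupI hharm
  have hψw : ψ w = φ w := G.psi_eq_on_I hupI hharm w hwI
  -- ψ is finite or semifinite
  have hψfos : G.FinOrSemifinite ψ := by
    by_cases hft : ∀ v, ψ v ≠ ⊤
    · exact Or.inl ⟨hψharm, hft⟩
    · push_neg at hft
      exact Or.inr ⟨hψharm, hft, G.psi_semifinite_cond hupI hfinI hharm⟩
  obtain ⟨C, hC⟩ := hind ψ hψfos hψle ⟨w, hwt, by rw [hψw]; exact hw0⟩
  -- C is not zero
  have hC0 : C ≠ 0 := by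
    intro h0
    have := hC w hwt
    rw [hψw, h0, zero_mul] at this
    exact hw0 this
  -- hence ψ(w') ≠ 0
  have hψw' : ψ w' ≠ 0 := by
    rw [hC w' hw't]
    exact mul_ne_zero hC0 hw'0
  obtain ⟨c, hcI, hc0, hLec⟩ := G.psi_ne_zero_majorant w' hψw'
  exact hno c hc0 (Relation.ReflTransGen.trans haw hcI) (Relation.ReflTransGen.trans hbw' hLec)

end GradedGraph

end

/-- the support of an indecomposable finite or semifinite harmonic
function is a primitive saturated coideal: it is a saturated coideal in which any two
vertices have a common majorant. -/
theorem supp_primitive (G : GradedGraph) (φ : G.V → ℝ≥0∞)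
    (hφ : G.Indecomposable φ) :
    G.IsSaturatedCoideal {a | φ a ≠ 0} ∧
      ∀ a b : G.V, φ a ≠ 0 → φ b ≠ 0 → ∃ c, φ c ≠ 0 ∧ G.Le a c ∧ G.Le b c := by
  have hharm : G.Harmonic φ := G.harmonic_of_finOrSemifinite hφ.1
  refine ⟨⟨?_, ?_⟩, ?_⟩
  · intro a ha b hba
    exact G.harmonic_supp_coideal hharm hba ha
  · intro a ha
    obtain ⟨b, hadj, hb⟩ := G.harmonic_supp_saturated hharm ha
    exact ⟨b, hb, hadj⟩
  · intro a b ha hb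
    exact G.main_common_majorant hφ ha hb
end

section
/- Generalized Boyer's lemma: Let (Γ,κ) be a graded graph, φ a harmonic function, I ⊆ Γ an ideal, J = Γ∖I, and λ ∈ J_n a vertex. Suppose there are m ∈ ℕ and non-negative reals {β_ν}_{ν∈I_m} such that (i) some ν ∈ I_m has β_ν ≠ 0 and φ(ν) > 0, and (ii) for all sufficiently large l and all η ∈ I_{n+l+1}: Σ_{μ∈J_{n+l}} dim(λ,μ)κ(μ,η) ≥ Σ_{ν∈I_m} β_ν dim(ν,η). Then φ(λ) = +∞. -/
open Filter Topology ENNReal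
open scoped Classical

noncomputable section
namespace GradedGraph

variable (G : GradedGraph)

/-- The finset of vertices at level `n`. -/
def Lvl (n : ℕ) : Finset G.V := (G.levelFinite n).toFinset

lemma mem_Lvl {n : ℕ} {v : G.V} : v ∈ G.Lvl n ↔ G.lvl v = n := by
  simp [Lvl]

lemma dimAux_nonneg (n : ℕ) (a b : G.V) : 0 ≤ G.dimAux n a b := by
  induction n generalizing b with
  | zero => rw [dimAux]; split <;> norm_num
  | succ n ih =>
    rw [dimAux]
    exact finsum_nonneg fun c => mul_nonneg (ih c) (G.k_nonneg c b)

lemma dimAux_lvl (n : ℕ) (a b : G.V) (h : G.dimAux n a b ≠ 0) :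
    G.lvl b = G.lvl a + n := by
  induction n generalizing b with
  | zero =>
    rw [dimAux] at h
    split at h
    · subst ‹a = b›; simp
    · simp at h
  | succ n ih =>
    rw [dimAux] at h
    obtain ⟨c, hc⟩ : ∃ c, G.dimAux n a c * G.k c b ≠ 0 := by
      by_contra hall
      push_neg at hall
      exact h (finsum_eq_zero_of_forall_eq_zero hall)
    have h1 : G.dimAux n a c ≠ 0 := fun h0 => hc (by rw [h0, zero_mul])
    have h2 : G.k c b ≠ 0 := fun h0 => hc (by rw [h0, mul_zero])
    rw [G.k_grade c b h2, ih c h1, add_assoc]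

lemma dimAux_le (n : ℕ) (a b : G.V) (h : G.dimAux n a b ≠ 0) : G.Le a b := by
  induction n generalizing b with
  | zero =>
    rw [dimAux] at h
    split at h
    · subst ‹a = b›; exact Relation.ReflTransGen.refl
    · simp at h
  | succ n ih =>
    rw [dimAux] at h
    obtain ⟨c, hc⟩ : ∃ c, G.dimAux n a c * G.k c b ≠ 0 := by
      by_contra hall
      push_neg at hall
      exact h (finsum_eq_zero_of_forall_eq_zero hall)
    have h1 : G.dimAux n a c ≠ 0 := fun h0 => hc (by rw [h0, zero_mul])
    have h2 : G.k c b ≠ 0 := fun h0 => hc (by rw [h0, mul_zero])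
    exact (ih c h1).tail (lt_of_le_of_ne (G.k_nonneg c b) (Ne.symm h2))

lemma dimAux_succ_sum (n : ℕ) (a b : G.V) :
    G.dimAux (n + 1) a b = ∑ c ∈ G.Lvl (G.lvl a + n), G.dimAux n a c * G.k c b := by
  rw [dimAux]
  refine finsum_eq_sum_of_support_subset _ fun c hc => ?_
  have h1 : G.dimAux n a c ≠ 0 := fun h0 => hc (by simp [Function.mem_support, h0])
  exact (G.mem_Lvl).2 (G.dimAux_lvl n a c h1)

lemma harmonic_sum {φ : G.V → ℝ≥0∞} (hφ : G.Harmonic φ) (a : G.V) :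
    φ a = ∑ b ∈ G.Lvl (G.lvl a + 1), ENNReal.ofReal (G.k a b) * φ b := by
  rw [hφ a]
  refine finsum_eq_sum_of_support_subset _ fun b hb => ?_
  have : G.k a b ≠ 0 := by
    intro h0
    apply hb
    simp [Function.mem_support, h0]
  exact (G.mem_Lvl).2 (G.k_grade a b this)

lemma harmonic_iter {φ : G.V → ℝ≥0∞} (hφ : G.Harmonic φ) (a : G.V) (l : ℕ) :
    φ a = ∑ b ∈ G.Lvl (G.lvl a + l), ENNReal.ofReal (G.dimAux l a b) * φ b := by
  induction l with
  | zero =>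
    rw [Finset.sum_eq_single a]
    · rw [dimAux]; simp
    · intro b _ hb
      rw [dimAux, if_neg (Ne.symm hb)]
      simp
    · intro ha; exact absurd ((G.mem_Lvl).2 (by simp)) ha
  | succ l ih =>
    rw [ih]
    have key : ∀ c ∈ G.Lvl (G.lvl a + l),
        ENNReal.ofReal (G.dimAux l a c) * φ c =
          ∑ b ∈ G.Lvl (G.lvl a + (l + 1)),
            ENNReal.ofReal (G.dimAux l a c) * (ENNReal.ofReal (G.k c b) * φ b) := by
      intro c hc
      rw [← Finset.mul_sum]
      congr 1
      have hlc : G.lvl c = G.lvl a + l := (G.mem_Lvl).1 hc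
      rw [G.harmonic_sum hφ c, hlc, add_assoc]
    rw [Finset.sum_congr rfl key, Finset.sum_comm]
    refine Finset.sum_congr rfl fun b hb => ?_
    rw [G.dimAux_succ_sum, ENNReal.ofReal_sum_of_nonneg
      (fun c _ => mul_nonneg (G.dimAux_nonneg l a c) (G.k_nonneg c b)), Finset.sum_mul]
    refine Finset.sum_congr rfl fun c hc => ?_
    rw [ENNReal.ofReal_mul (G.dimAux_nonneg l a c), mul_assoc]

end GradedGraph
end
noncomputable section
namespace GradedGraph
variable (G : GradedGraph)

lemma dim_eq_dimAux (a b : G.V) (l : ℕ) (h : G.lvl b = G.lvl a + l) :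
    G.dim a b = G.dimAux l a b := by
  unfold dim
  rw [h]
  congr 1
  omega

lemma dim_nonneg (a b : G.V) : 0 ≤ G.dim a b := G.dimAux_nonneg _ a b

end GradedGraph
end
/-- Generalized Boyer's lemma. -/
theorem generalized_boyer (G : GradedGraph) (φ : G.V → ℝ≥0∞) (hφ : G.Harmonic φ)
    (I : Set G.V) (hI : G.IsIdeal I) (lam : G.V) (hlam : lam ∉ I)
    (m : ℕ) (β : G.V → ℝ) (hβ0 : ∀ ν, 0 ≤ β ν)
    (hβsupp : ∀ ν, β ν ≠ 0 → ν ∈ I ∧ G.lvl ν = m)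
    (hex : ∃ ν, ν ∈ I ∧ G.lvl ν = m ∧ β ν ≠ 0 ∧ φ ν ≠ 0)
    (hineq : ∃ L, ∀ l ≥ L, ∀ η, η ∈ I → G.lvl η = G.lvl lam + l + 1 →
      (∑ᶠ ν ∈ {ν : G.V | ν ∈ I ∧ G.lvl ν = m}, β ν * G.dim ν η) ≤
        ∑ᶠ μ ∈ {μ : G.V | μ ∉ I ∧ G.lvl μ = G.lvl lam + l},
          G.dim lam μ * G.k μ η) :
    φ lam = ⊤ := by
  obtain ⟨ν0, hν0I, hν0m, hν0β, hν0φ⟩ := hex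
  obtain ⟨L, hL⟩ := hineq
  set c : ℝ≥0∞ := ENNReal.ofReal (β ν0) * φ ν0 with hc_def
  have hc0 : c ≠ 0 := by
    refine mul_ne_zero ?_ hν0φ
    simpa [ENNReal.ofReal_eq_zero, not_le] using
      lt_of_le_of_ne (hβ0 ν0) (Ne.symm hν0β)
  set T : ℕ → ℝ≥0∞ := fun l =>
    ∑ η ∈ (G.Lvl (G.lvl lam + l)).filter (· ∈ I),
      ENNReal.ofReal (G.dim lam η) * φ η with hT_def
  -- (F1) : T l ≤ φ lam for every l
  have hF1 : ∀ l, T l ≤ φ lam := by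
    intro l
    have h1 : T l = ∑ η ∈ (G.Lvl (G.lvl lam + l)).filter (· ∈ I),
        ENNReal.ofReal (G.dimAux l lam η) * φ η := by
      refine Finset.sum_congr rfl fun η hη => ?_
      rw [G.dim_eq_dimAux lam η l (G.mem_Lvl.1 (Finset.mem_filter.1 hη).1)]
    rw [h1, G.harmonic_iter hφ lam l]
    exact Finset.sum_le_sum_of_subset (Finset.filter_subset _ _)
  -- (F2) : key step
  have key : ∀ l : ℕ, L ≤ l → m ≤ l → T l + c ≤ T (l + 1) := by
    intro l hLl hml
    -- expand T (l+1)
    have hTl1 : T (l + 1) =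
        ∑ η ∈ (G.Lvl (G.lvl lam + l + 1)).filter (· ∈ I),
          ((∑ μ ∈ (G.Lvl (G.lvl lam + l)).filter (· ∈ I),
              ENNReal.ofReal (G.dimAux l lam μ * G.k μ η) * φ η) +
           ∑ μ ∈ (G.Lvl (G.lvl lam + l)).filter (fun μ => ¬ μ ∈ I),
              ENNReal.ofReal (G.dimAux l lam μ * G.k μ η) * φ η) := by
      refine Finset.sum_congr rfl fun η hη => ?_
      have hηl : G.lvl η = G.lvl lam + (l + 1) :=
        G.mem_Lvl.1 (Finset.mem_filter.1 hη).1
      rw [G.dim_eq_dimAux lam η (l + 1) hηl, G.dimAux_succ_sum,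
        ENNReal.ofReal_sum_of_nonneg
          (fun μ _ => mul_nonneg (G.dimAux_nonneg l lam μ) (G.k_nonneg μ η)),
        Finset.sum_mul,
        ← Finset.sum_filter_add_sum_filter_not (G.Lvl (G.lvl lam + l)) (· ∈ I)]
    rw [hTl1, Finset.sum_add_distrib]
    have hA : ∑ η ∈ (G.Lvl (G.lvl lam + l + 1)).filter (· ∈ I),
        ∑ μ ∈ (G.Lvl (G.lvl lam + l)).filter (· ∈ I),
          ENNReal.ofReal (G.dimAux l lam μ * G.k μ η) * φ η = T l := by
      rw [Finset.sum_comm]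
      simp only [hT_def]
      refine Finset.sum_congr rfl fun μ hμ => ?_
      obtain ⟨hμLvl, hμI⟩ := Finset.mem_filter.1 hμ
      have hμl : G.lvl μ = G.lvl lam + l := G.mem_Lvl.1 hμLvl
      have hterm : ∀ η, ENNReal.ofReal (G.dimAux l lam μ * G.k μ η) * φ η
          = ENNReal.ofReal (G.dimAux l lam μ) * (ENNReal.ofReal (G.k μ η) * φ η) := by
        intro η
        rw [ENNReal.ofReal_mul (G.dimAux_nonneg l lam μ), mul_assoc]
      simp only [hterm]
      rw [← Finset.mul_sum]
      have hsum : ∑ η ∈ (G.Lvl (G.lvl lam + l + 1)).filter (· ∈ I),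
          ENNReal.ofReal (G.k μ η) * φ η
          = ∑ η ∈ G.Lvl (G.lvl lam + l + 1), ENNReal.ofReal (G.k μ η) * φ η := by
        refine Finset.sum_subset (Finset.filter_subset _ _) fun η hη hηn => ?_
        have hηI : η ∉ I := fun h => hηn (Finset.mem_filter.2 ⟨hη, h⟩)
        have hk : G.k μ η = 0 := by
          by_contra hk
          exact hηI (hI μ hμI η (Relation.ReflTransGen.single
            (lt_of_le_of_ne (G.k_nonneg μ η) (Ne.symm hk))))
        rw [hk]
        simp
      rw [hsum, G.dim_eq_dimAux lam μ l hμl]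
      congr 1
      rw [G.harmonic_sum hφ μ, hμl]
    have hB : c ≤ ∑ η ∈ (G.Lvl (G.lvl lam + l + 1)).filter (· ∈ I),
        ∑ μ ∈ (G.Lvl (G.lvl lam + l)).filter (fun μ => ¬ μ ∈ I),
          ENNReal.ofReal (G.dimAux l lam μ * G.k μ η) * φ η := by
      have hstep1 : ∀ η ∈ (G.Lvl (G.lvl lam + l + 1)).filter (· ∈ I),
          ∑ ν ∈ (G.Lvl m).filter (· ∈ I), ENNReal.ofReal (β ν * G.dim ν η) * φ η
            ≤ ∑ μ ∈ (G.Lvl (G.lvl lam + l)).filter (fun μ => ¬ μ ∈ I),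
                ENNReal.ofReal (G.dimAux l lam μ * G.k μ η) * φ η := by
        intro η hη
        obtain ⟨hηLvl, hηI⟩ := Finset.mem_filter.1 hη
        have hηl : G.lvl η = G.lvl lam + l + 1 := G.mem_Lvl.1 hηLvl
        have hin := hL l hLl η hηI hηl
        have hsJ : {μ : G.V | μ ∉ I ∧ G.lvl μ = G.lvl lam + l}
            = ↑((G.Lvl (G.lvl lam + l)).filter (fun μ => ¬ μ ∈ I)) := by
          ext μ
          simp [GradedGraph.mem_Lvl, and_comm]
        have hsI : {ν : G.V | ν ∈ I ∧ G.lvl ν = m} = ↑((G.Lvl m).filter (· ∈ I)) := by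
          ext ν
          simp [GradedGraph.mem_Lvl, and_comm]
        rw [hsJ, hsI, finsum_mem_coe_finset, finsum_mem_coe_finset] at hin
        rw [← Finset.sum_mul, ← Finset.sum_mul]
        refine mul_le_mul_left ?_ (φ η)
        rw [← ENNReal.ofReal_sum_of_nonneg
            (fun ν _ => mul_nonneg (hβ0 ν) (G.dim_nonneg ν η)),
          ← ENNReal.ofReal_sum_of_nonneg
            (fun μ _ => mul_nonneg (G.dimAux_nonneg l lam μ) (G.k_nonneg μ η))]
        refine ENNReal.ofReal_le_ofReal (le_trans hin (le_of_eq ?_))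
        refine Finset.sum_congr rfl fun μ hμ => ?_
        rw [G.dim_eq_dimAux lam μ l (G.mem_Lvl.1 (Finset.mem_filter.1 hμ).1)]
      refine le_trans ?_ (Finset.sum_le_sum hstep1)
      rw [Finset.sum_comm]
      have hν0mem : ν0 ∈ (G.Lvl m).filter (· ∈ I) :=
        Finset.mem_filter.2 ⟨G.mem_Lvl.2 hν0m, hν0I⟩
      refine le_trans ?_ (Finset.single_le_sum (fun ν _ => zero_le) hν0mem)
      have hterm : ∀ η, ENNReal.ofReal (β ν0 * G.dim ν0 η) * φ η
          = ENNReal.ofReal (β ν0) * (ENNReal.ofReal (G.dim ν0 η) * φ η) := fun η => by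
        rw [ENNReal.ofReal_mul (hβ0 ν0), mul_assoc]
      simp only [hterm]
      rw [← Finset.mul_sum, hc_def]
      refine mul_le_mul_right ?_ _
      have hconv : ∀ η ∈ (G.Lvl (G.lvl lam + l + 1)).filter (· ∈ I),
          ENNReal.ofReal (G.dim ν0 η) * φ η
            = ENNReal.ofReal (G.dimAux (G.lvl lam + l + 1 - m) ν0 η) * φ η := by
        intro η hη
        rw [G.dim_eq_dimAux ν0 η (G.lvl lam + l + 1 - m) (by
          rw [G.mem_Lvl.1 (Finset.mem_filter.1 hη).1, hν0m]; omega)]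
      rw [Finset.sum_congr rfl hconv]
      have hsum : ∑ η ∈ (G.Lvl (G.lvl lam + l + 1)).filter (· ∈ I),
          ENNReal.ofReal (G.dimAux (G.lvl lam + l + 1 - m) ν0 η) * φ η
          = ∑ η ∈ G.Lvl (G.lvl lam + l + 1),
              ENNReal.ofReal (G.dimAux (G.lvl lam + l + 1 - m) ν0 η) * φ η := by
        refine Finset.sum_subset (Finset.filter_subset _ _) fun η hη hηn => ?_
        have hηI : η ∉ I := fun h => hηn (Finset.mem_filter.2 ⟨hη, h⟩)
        have hd : G.dimAux (G.lvl lam + l + 1 - m) ν0 η = 0 := by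
          by_contra hd
          exact hηI (hI ν0 hν0I η (G.dimAux_le _ ν0 η hd))
        rw [hd]
        simp
      rw [hsum]
      have hit := G.harmonic_iter hφ ν0 (G.lvl lam + l + 1 - m)
      rw [hν0m] at hit
      have hmeq : m + (G.lvl lam + l + 1 - m) = G.lvl lam + l + 1 := by omega
      rw [hmeq] at hit
      exact le_of_eq hit
    rw [hA]
    exact add_le_add_right hB _
  -- iterate the key step
  set l0 : ℕ := max L m with hl0
  have iter : ∀ j : ℕ, (j : ℝ≥0∞) * c ≤ T (l0 + j) := by
    intro j
    induction j with
    | zero => simp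
    | succ j ih =>
      have h1 : T (l0 + j) + c ≤ T (l0 + j + 1) :=
        key (l0 + j) (le_trans (le_max_left _ _) (Nat.le_add_right _ _))
          (le_trans (le_max_right _ _) (Nat.le_add_right _ _))
      calc ((j + 1 : ℕ) : ℝ≥0∞) * c = (j : ℝ≥0∞) * c + c := by push_cast; ring
        _ ≤ T (l0 + j) + c := add_le_add_left ih c
        _ ≤ T (l0 + j + 1) := h1
        _ = T (l0 + (j + 1)) := by ring_nf
  have hall : ∀ j : ℕ, (j : ℝ≥0∞) * c ≤ φ lam := fun j =>
    le_trans (iter j) (hF1 _)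
  -- conclude
  by_cases hctop : c = ⊤
  · have := hall 1
    rw [hctop] at this
    simpa using this
  · by_contra hne
    obtain ⟨j, hj⟩ := ENNReal.exists_nat_gt (ENNReal.div_lt_top hne hc0).ne
    have : φ lam < (j : ℝ≥0∞) * c :=
      (ENNReal.div_lt_iff (Or.inl hc0) (Or.inl hctop)).1 hj
    exact absurd (hall j) (not_le.2 this)
end
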